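/- Every f ∈ G_n with A(f) = 0 can be written as a product of two elements of G_n each of finite order. -/

import Mathlib

abbrev Circle1 : Type := AddCircle (1 : ℝ)

abbrev Gn (n : ℕ) : Type := (Fin n → Circle1) × Equiv.Perm (Fin n)

namespace Gn
variable {n : ℕ}

noncomputable instance : Mul (Gn n) := ⟨fun f g => ⟨fun j => g.1 j + f.1 (g.2 j), f.2 * g.2⟩⟩
noncomputable instance : One (Gn n) := ⟨⟨fun _ => 0, 1⟩⟩
noncomputable instance : Inv (Gn n) := ⟨fun f => ⟨fun j => -f.1 (f.2⁻¹ j), f.2⁻¹⟩⟩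

noncomputable instance : Group (Gn n) where
  mul_assoc f g h := Prod.ext (funext fun j => (add_assoc _ _ _).symm) rfl
  one_mul f := Prod.ext (funext fun j => add_zero _) (one_mul _)
  mul_one f := Prod.ext (funext fun j => zero_add _) (mul_one _)
  inv_mul_cancel f := Prod.ext
    (funext fun j => show f.1 j + -f.1 (f.2⁻¹ (f.2 j)) = 0 by simp)
    (inv_mul_cancel _)

@[simp] lemma mul_fst (f g : Gn n) (j : Fin n) : (f * g).1 j = g.1 j + f.1 (g.2 j) := rfl
@[simp] lemma mul_snd (f g : Gn n) : (f * g).2 = f.2 * g.2 := rfl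
@[simp] lemma one_fst (j : Fin n) : (1 : Gn n).1 j = 0 := rfl
@[simp] lemma one_snd : (1 : Gn n).2 = 1 := rfl
@[simp] lemma inv_fst (f : Gn n) (j : Fin n) : (f⁻¹).1 j = -f.1 (f.2⁻¹ j) := rfl
@[simp] lemma inv_snd (f : Gn n) : (f⁻¹).2 = f.2⁻¹ := rfl


/-- The map `A : G_n → 𝕋`, `A(α, σ) = 2(α_1 + ⋯ + α_n)` (it is a group homomorphism). -/
noncomputable def Afun (f : Gn n) : Circle1 := 2 • ∑ j, f.1 j

end Gn


namespace Gn
open Fin.NatCast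

lemma pure_perm_pow {n : ℕ} (π : Equiv.Perm (Fin n)) (k : ℕ) :
    ((⟨fun _ => 0, π⟩ : Gn n)) ^ k = ⟨fun _ => 0, π ^ k⟩ := by
  induction k with
  | zero => rfl
  | succ k ih =>
    rw [pow_succ, ih]
    exact Prod.ext (funext fun j => add_zero 0) (pow_succ π k).symm

lemma pure_perm_finOrder {n : ℕ} (π : Equiv.Perm (Fin n)) :
    IsOfFinOrder ((⟨fun _ => 0, π⟩ : Gn n)) := by
  rw [isOfFinOrder_iff_pow_eq_one]
  refine ⟨orderOf π, orderOf_pos π, ?_⟩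
  rw [pure_perm_pow, pow_orderOf_eq_one]
  rfl

lemma gen_pow {n : ℕ} (β : Fin n → Circle1) (c : Equiv.Perm (Fin n)) (k : ℕ) :
    ((⟨β, c⟩ : Gn n)) ^ k =
      ⟨fun j => ∑ i ∈ Finset.range k, β ((c ^ i) j), c ^ k⟩ := by
  induction k with
  | zero => exact Prod.ext (funext fun j => by simp) rfl
  | succ k ih =>
    rw [pow_succ, ih]
    refine Prod.ext (funext fun j => ?_) (by simp [pow_succ])
    show β j + ∑ i ∈ Finset.range k, β ((c ^ i) (c j)) =
      ∑ i ∈ Finset.range (k + 1), β ((c ^ i) j)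
    rw [Finset.sum_range_succ']
    simp only [pow_succ, Equiv.Perm.mul_apply, pow_zero, Equiv.Perm.one_apply]
    rw [add_comm]

lemma finRotate_pow {m : ℕ} (i : ℕ) (j : Fin (m + 1)) :
    ((finRotate (m + 1)) ^ i) j = j + i := by
  induction i with
  | zero => simp
  | succ i ih =>
    rw [pow_succ', Equiv.Perm.mul_apply, ih, finRotate_succ_apply]
    push_cast
    abel

end Gn

open Fin.NatCast

/-- Every `f ∈ G_n` with `A(f) = 0` is a product of two finite order elements of `G_n`. -/
theorem stmt11 {n : ℕ} (f : Gn n) (hf : Gn.Afun f = 0) :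
    ∃ g h : Gn n, IsOfFinOrder g ∧ IsOfFinOrder h ∧ f = g * h := by
  cases n with
  | zero =>
    refine ⟨1, 1, IsOfFinOrder.one, IsOfFinOrder.one, ?_⟩
    refine Prod.ext (funext fun j => j.elim0) (Subsingleton.elim _ _)
  | succ m =>
    set s : Circle1 := ∑ j, f.1 j with hs
    have h2s : s + s = 0 := by
      have : (2 : ℕ) • s = 0 := hf
      rwa [two_nsmul] at this
    set c : Equiv.Perm (Fin (m + 1)) := finRotate (m + 1) with hc
    refine ⟨⟨fun _ => 0, f.2 * c⁻¹⟩, ⟨f.1, c⟩, Gn.pure_perm_finOrder _, ?_, ?_⟩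
    · rw [isOfFinOrder_iff_pow_eq_one]
      refine ⟨2 * (m + 1), by positivity, ?_⟩
      have key : ((⟨f.1, c⟩ : Gn (m + 1))) ^ (m + 1) = ⟨fun _ => s, 1⟩ := by
        rw [Gn.gen_pow]
        refine Prod.ext (funext fun j => ?_) ?_
        · show ∑ i ∈ Finset.range (m + 1), f.1 ((c ^ i) j) = s
          have : ∀ i : ℕ, (c ^ i) j = j + (i : Fin (m + 1)) := fun i => Gn.finRotate_pow i j
          simp only [this]
          rw [← Fin.sum_univ_eq_sum_range (fun i => f.1 (j + (i : Fin (m+1))))]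
          rw [hs]
          refine Fintype.sum_equiv (Equiv.addLeft j) _ _ fun i => ?_
          simp [Equiv.addLeft]
        · show c ^ (m + 1) = 1
          ext j
          rw [Gn.finRotate_pow]
          simp
      rw [show 2 * (m + 1) = (m + 1) * 2 by ring, pow_mul, key, pow_two]
      refine Prod.ext (funext fun j => ?_) (by simp)
      show s + s = 0
      exact h2s
    · refine Prod.ext (funext fun j => ?_) ?_
      · exact (add_zero (f.1 j)).symm
      · show f.2 = (f.2 * c⁻¹) * c
        simp
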